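/- arXiv:2106.01783 — 2 statements merged into one kernel-verified Lean document; each statement's English description precedes it below -/
import Mathlib

section
/- Let C be any comb domain, i.e. C = ℂ ∖ ⋃_{n∈ℤ} {x_n + iy : |y| ≥ b_n} for a strictly increasing real sequence (x_n)_{n∈ℤ} with x_0 = 0 and inf_{n∈ℤ}(x_n − x_{n−1}) > 0 and positive reals (b_n)_{n∈ℤ}. Then the Hardy number of C satisfies h(C) ≥ 1. -/
open Complex Set MeasureTheory

/-- `f` belongs to the Hardy space `H^p(𝔻)`: it is holomorphic on the unit disk and the
integral means of `|f|^p` over circles of radius `r < 1` are uniformly bounded. -/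
def MemHardy (p : ℝ) (f : ℂ → ℂ) : Prop :=
  DifferentiableOn ℂ f (Metric.ball 0 1) ∧
  ∃ M : ℝ, ∀ r : ℝ, 0 < r → r < 1 →
    (∫ θ in (0:ℝ)..(2 * Real.pi),
        ‖f ((r : ℂ) * Complex.exp ((θ : ℂ) * Complex.I))‖ ^ p) ≤ M

/-- `f` is a Riemann map of the unit disk onto `D`: a holomorphic injection of `𝔻`
with image `D` (hence a conformal bijection from `𝔻` onto `D`). -/
def IsRiemannMap (f : ℂ → ℂ) (D : Set ℂ) : Prop :=
  DifferentiableOn ℂ f (Metric.ball 0 1) ∧ Set.InjOn f (Metric.ball 0 1) ∧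
  f '' (Metric.ball 0 1) = D

/-- The Hardy number of (the domain uniformized by) `f`:
the supremum of all `p > 0` with `f ∈ H^p(𝔻)`, as an extended nonnegative real. -/
noncomputable def hardyNumber (f : ℂ → ℂ) : ENNReal :=
  sSup {x : ENNReal | ∃ p : ℝ, 0 < p ∧ MemHardy p f ∧ x = ENNReal.ofReal p}

/-- `C` is a comb domain: the plane minus the vertical rays `{xₙ + iy : |y| ≥ bₙ}`,
where `(xₙ)` is strictly increasing with `x₀ = 0` and gaps bounded below by a positive
constant, and the `bₙ` are positive. -/
def IsCombDomain (C : Set ℂ) : Prop :=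
  ∃ (x : ℤ → ℝ) (b : ℤ → ℝ),
    StrictMono x ∧ x 0 = 0 ∧ (∃ δ : ℝ, 0 < δ ∧ ∀ n : ℤ, δ ≤ x n - x (n - 1)) ∧
    (∀ n, 0 < b n) ∧
    C = (⋃ n : ℤ, {z : ℂ | z.re = x n ∧ b n ≤ |z.im|})ᶜ

/-- Subadditivity of `rpow` with exponent in `[0,1]` for nonnegative reals. -/
lemma my_rpow_add_le_add_rpow {x y p : ℝ} (hx : 0 ≤ x) (hy : 0 ≤ y)
    (hp : 0 ≤ p) (hp1 : p ≤ 1) : (x + y) ^ p ≤ x ^ p + y ^ p := by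
  have h := NNReal.rpow_add_le_add_rpow (⟨x, hx⟩ : NNReal) (⟨y, hy⟩ : NNReal) hp hp1
  have h' := (NNReal.coe_le_coe).2 h
  push_cast at h'
  exact h'

/-- Mean value property: the circle average of a holomorphic function on the unit disk. -/
lemma my_circle_mean {H : ℂ → ℂ} (hH : DifferentiableOn ℂ H (Metric.ball 0 1))
    {r : ℝ} (hr0 : 0 < r) (hr1 : r < 1) :
    (∫ θ in (0:ℝ)..(2 * Real.pi), H (circleMap 0 r θ)) = (2 * Real.pi) * H 0 := by
  have hsub : Metric.closedBall (0:ℂ) r ⊆ Metric.ball 0 1 :=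
    Metric.closedBall_subset_ball hr1
  have hdc : DiffContOnCl ℂ H (Metric.ball 0 r) := by
    constructor
    · exact hH.mono (Metric.ball_subset_ball hr1.le)
    · refine (hH.continuousOn).mono ?_
      rw [closure_ball (0:ℂ) hr0.ne']
      exact hsub
  have h0 : (0:ℂ) ∈ Metric.ball (0:ℂ) r := by simpa using hr0
  have hc := hdc.circleIntegral_sub_inv_smul h0
  -- unfold the circle integral
  rw [circleIntegral] at hc
  have hpt : ∀ θ : ℝ,
      deriv (circleMap 0 r) θ • ((circleMap 0 r θ - 0)⁻¹ • H (circleMap 0 r θ))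
        = Complex.I * H (circleMap 0 r θ) := by
    intro θ
    have hne : circleMap 0 r θ ≠ 0 := circleMap_ne_center hr0.ne'
    rw [deriv_circleMap]
    simp only [sub_zero, smul_eq_mul]
    field_simp
  rw [intervalIntegral.integral_congr (fun θ _ => hpt θ)] at hc
  rw [intervalIntegral.integral_const_mul] at hc
  have : Complex.I * (∫ θ in (0:ℝ)..(2 * Real.pi), H (circleMap 0 r θ))
      = Complex.I * ((2 * Real.pi) * H 0) := by
    rw [hc]
    simp only [smul_eq_mul]
    push_cast
    ring
  exact mul_left_cancel₀ Complex.I_ne_zero this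

/-- Lower bound for the real part of a complex power. -/
lemma my_cpow_re_lower {A : ℂ} (hA : A ≠ 0) {q : ℝ} (hq : 0 ≤ q) (hq1 : q ≤ 1) :
    ‖A‖ ^ q * Real.cos (q * Real.pi) ≤ (A ^ (q : ℂ)).re := by
  have habs : 0 < ‖A‖ := norm_pos_iff.mpr hA
  have hre : (A ^ (q : ℂ)).re
      = ‖A‖ ^ q * Real.cos (Complex.arg A * q) := by
    rw [Complex.cpow_def_of_ne_zero hA, Complex.exp_re]
    have h1 : (Complex.log A * (q : ℂ)).re = Real.log (‖A‖) * q := by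
      simp [Complex.mul_re, Complex.log_re]
    have h2 : (Complex.log A * (q : ℂ)).im = Complex.arg A * q := by
      simp [Complex.mul_im, Complex.log_im]
    rw [h1, h2, Real.rpow_def_of_pos habs]
  rw [hre]
  have hcos : Real.cos (q * Real.pi) ≤ Real.cos (Complex.arg A * q) := by
    have h1 : |Complex.arg A * q| ≤ q * Real.pi := by
      rw [abs_mul, _root_.abs_of_nonneg hq, mul_comm]
      exact mul_le_mul_of_nonneg_left (Complex.abs_arg_le_pi A) hq
    have h2 : q * Real.pi ≤ Real.pi := by
      nlinarith [Real.pi_pos]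
    calc Real.cos (q * Real.pi)
        ≤ Real.cos |Complex.arg A * q| :=
          Real.cos_le_cos_of_nonneg_of_le_pi (abs_nonneg _) h2 h1
      _ = Real.cos (Complex.arg A * q) := Real.cos_abs _
  exact mul_le_mul_of_nonneg_left hcos (Real.rpow_nonneg habs.le q)

/-- The key analytic step: a Riemann map onto a domain avoiding a vertical cross
belongs to `H^p` for every `0 < p < 1`. -/
lemma my_memHardy (C : Set ℂ) (hC : IsCombDomain C)
    (f : ℂ → ℂ) (hf : IsRiemannMap f C) {p : ℝ} (hp0 : 0 < p) (hp1 : p < 1) :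
    MemHardy p f := by
  obtain ⟨x, b, _, hx0, _, hbpos, hCeq⟩ := hC
  obtain ⟨hfd, _, hfim⟩ := hf
  set β : ℝ := b 0 with hβdef
  have hβ : 0 < β := hbpos 0
  -- the domain avoids the central tooth
  have hmemC : ∀ z ∈ Metric.ball (0:ℂ) 1, f z ∈ C := by
    intro z hz
    rw [← hfim]; exact Set.mem_image_of_mem f hz
  have hslit : ∀ z ∈ Metric.ball (0:ℂ) 1,
      f z ^ 2 + ((β:ℂ))^2 ∈ Complex.slitPlane := by
    intro z hz
    have hzC := hmemC z hz
    rw [hCeq, Set.mem_compl_iff] at hzC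
    have h0 : ¬((f z).re = x 0 ∧ b 0 ≤ |(f z).im|) := by
      intro h
      exact hzC (Set.mem_iUnion.2 ⟨0, h⟩)
    rw [hx0] at h0
    rw [Complex.mem_slitPlane_iff]
    by_contra hcon
    push_neg at hcon
    obtain ⟨h1, h2⟩ := hcon
    have hre : (f z ^ 2 + ((β:ℂ))^2).re = (f z).re ^ 2 - (f z).im ^ 2 + β ^ 2 := by
      simp [pow_two, Complex.mul_re, Complex.add_re]
      try ring
    have him : (f z ^ 2 + ((β:ℂ))^2).im = 2 * (f z).re * (f z).im := by
      simp [pow_two, Complex.mul_im, Complex.add_im]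
      try ring
    rw [hre] at h1
    rw [him] at h2
    -- from h2 : 2*re*im = 0
    rcases mul_eq_zero.1 h2 with h3 | him0
    · rcases mul_eq_zero.1 h3 with h4 | hre0
      · norm_num at h4
      · -- re = 0
        have : (f z).im ^ 2 ≥ β ^ 2 := by nlinarith
        have habs : β ≤ |(f z).im| := by
          by_contra hlt
          push_neg at hlt
          nlinarith [_root_.sq_abs (f z).im, abs_nonneg (f z).im]
        exact h0 ⟨hre0, habs⟩
    · nlinarith
  -- the holomorphic function H
  set A : ℂ → ℂ := fun z => f z ^ 2 + ((β:ℂ))^2 with hAdef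
  set H : ℂ → ℂ := fun z => A z ^ ((p/2 : ℝ) : ℂ) with hHdef
  have hAd : DifferentiableOn ℂ A (Metric.ball 0 1) := by
    exact (hfd.pow 2).add_const _
  have hHd : DifferentiableOn ℂ H (Metric.ball 0 1) :=
    hAd.cpow (differentiableOn_const _) (fun z hz => hslit z hz)
  set γ : ℝ := Real.cos ((p/2) * Real.pi) with hγdef
  have hγpos : 0 < γ := by
    apply Real.cos_pos_of_mem_Ioo
    constructor
    · nlinarith [Real.pi_pos]
    · nlinarith [Real.pi_pos]
  -- pointwise estimate
  have hpoint : ∀ z ∈ Metric.ball (0:ℂ) 1,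
      ‖f z‖ ^ p ≤ (H z).re / γ + β ^ p := by
    intro z hz
    have hAne : A z ≠ 0 := Complex.slitPlane_ne_zero (hslit z hz)
    have hb1 : ‖f z‖ ^ p ≤ ‖A z‖ ^ (p/2) + β ^ p := by
      have e1 : ‖f z‖ ^ 2 ≤ ‖A z‖ + β ^ 2 := by
        have : f z ^ 2 = A z - ((β:ℂ))^2 := by rw [hAdef]; ring
        calc ‖f z‖ ^ 2 = ‖f z ^ 2‖ := by
              rw [norm_pow]
          _ = ‖A z - ((β:ℂ))^2‖ := by rw [this]
          _ ≤ ‖A z‖ + ‖((β:ℂ))^2‖ := by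
              exact norm_sub_le _ _
          _ = ‖A z‖ + β ^ 2 := by
              rw [norm_pow]
              simp [abs_of_pos hβ]
      have e2 : ‖f z‖ ^ p = (‖f z‖ ^ 2) ^ (p/2) := by
        rw [← Real.rpow_natCast (‖f z‖) 2,
          ← Real.rpow_mul (norm_nonneg _)]
        rw [show ((2:ℕ):ℝ) * (p/2) = p by push_cast; ring]
      have e3 : (‖f z‖ ^ 2) ^ (p/2)
          ≤ (‖A z‖ + β ^ 2) ^ (p/2) :=
        Real.rpow_le_rpow (by positivity) e1 (by linarith)
      have e4 : (‖A z‖ + β ^ 2) ^ (p/2)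
          ≤ ‖A z‖ ^ (p/2) + (β ^ 2) ^ (p/2) :=
        my_rpow_add_le_add_rpow (norm_nonneg _) (by positivity)
          (by linarith) (by linarith)
      have e5 : ((β:ℝ) ^ 2) ^ (p/2) = β ^ p := by
        rw [← Real.rpow_natCast β 2, ← Real.rpow_mul hβ.le]
        rw [show ((2:ℕ):ℝ) * (p/2) = p by push_cast; ring]
      rw [e2]
      calc (‖f z‖ ^ 2) ^ (p/2)
          ≤ ‖A z‖ ^ (p/2) + (β ^ 2) ^ (p/2) := le_trans e3 e4
        _ = ‖A z‖ ^ (p/2) + β ^ p := by rw [e5]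
    have hb2 : ‖A z‖ ^ (p/2) ≤ (H z).re / γ := by
      have h := my_cpow_re_lower hAne (q := p/2) (by linarith) (by linarith)
      rw [le_div_iff₀ hγpos]
      exact h
    linarith
  refine ⟨hfd, (2 * Real.pi) * (H 0).re / γ + (2 * Real.pi) * β ^ p, ?_⟩
  intro r hr0 hr1
  have hcirc : ∀ θ : ℝ, (r : ℂ) * Complex.exp ((θ:ℂ) * Complex.I) = circleMap 0 r θ := by
    intro θ; simp [circleMap]
  have hmemball : ∀ θ : ℝ, circleMap 0 r θ ∈ Metric.ball (0:ℂ) 1 := by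
    intro θ
    rw [Metric.mem_ball, dist_zero_right, norm_circleMap_zero,
      _root_.abs_of_pos hr0]
    exact hr1
  -- continuity facts
  have hfc : Continuous fun θ : ℝ => f (circleMap 0 r θ) :=
    hfd.continuousOn.comp_continuous (continuous_circleMap 0 r) hmemball
  have hHc : Continuous fun θ : ℝ => H (circleMap 0 r θ) :=
    hHd.continuousOn.comp_continuous (continuous_circleMap 0 r) hmemball
  have hHre : Continuous fun θ : ℝ => (H (circleMap 0 r θ)).re :=
    Complex.continuous_re.comp hHc
  have hlhsc : Continuous fun θ : ℝ => ‖f (circleMap 0 r θ)‖ ^ p := by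
    apply Continuous.rpow_const (continuous_norm.comp hfc)
    intro θ; right; exact hp0.le
  have hrhsc : Continuous fun θ : ℝ => (H (circleMap 0 r θ)).re / γ + β ^ p :=
    (hHre.div_const γ).add continuous_const
  have hmono : (∫ θ in (0:ℝ)..(2 * Real.pi),
      ‖f (circleMap 0 r θ)‖ ^ p)
      ≤ ∫ θ in (0:ℝ)..(2 * Real.pi), ((H (circleMap 0 r θ)).re / γ + β ^ p) := by
    apply intervalIntegral.integral_mono_on (by positivity)
      (hlhsc.intervalIntegrable _ _) (hrhsc.intervalIntegrable _ _)
    intro θ _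
    exact hpoint _ (hmemball θ)
  have hmean : (∫ θ in (0:ℝ)..(2 * Real.pi), (H (circleMap 0 r θ)).re)
      = (2 * Real.pi) * (H 0).re := by
    have h1 : (∫ θ in (0:ℝ)..(2 * Real.pi), H (circleMap 0 r θ))
        = (2 * Real.pi) * H 0 := my_circle_mean hHd hr0 hr1
    have h2 := Complex.reCLM.intervalIntegral_comp_comm
      (hHc.intervalIntegrable (μ := MeasureTheory.volume) (0:ℝ) (2 * Real.pi))
    simp only [Complex.reCLM_apply] at h2
    rw [h2, h1]
    simp
  have hrhs : (∫ θ in (0:ℝ)..(2 * Real.pi), ((H (circleMap 0 r θ)).re / γ + β ^ p))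
      = (2 * Real.pi) * (H 0).re / γ + (2 * Real.pi) * β ^ p := by
    rw [intervalIntegral.integral_add
      ((hHre.div_const γ).intervalIntegrable _ _)
      ((continuous_const (y := β ^ p)).intervalIntegrable _ _)]
    rw [intervalIntegral.integral_div, hmean, intervalIntegral.integral_const]
    simp only [smul_eq_mul]
    try ring
  calc (∫ θ in (0:ℝ)..(2 * Real.pi),
      ‖f ((r : ℂ) * Complex.exp ((θ:ℂ) * Complex.I))‖ ^ p)
      = ∫ θ in (0:ℝ)..(2 * Real.pi), ‖f (circleMap 0 r θ)‖ ^ p := by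
        apply intervalIntegral.integral_congr
        intro θ _
        simp only [hcirc]
    _ ≤ ∫ θ in (0:ℝ)..(2 * Real.pi), ((H (circleMap 0 r θ)).re / γ + β ^ p) := hmono
    _ = (2 * Real.pi) * (H 0).re / γ + (2 * Real.pi) * β ^ p := hrhs

/-- The Hardy number of any comb domain is at least `1`. -/
theorem hardyNumber_comb_ge_one (C : Set ℂ) (hC : IsCombDomain C)
    (f : ℂ → ℂ) (hf : IsRiemannMap f C) : 1 ≤ hardyNumber f := by
  by_contra hcon
  push_neg at hcon
  set a := hardyNumber f with ha
  have hat : a ≠ ⊤ := by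
    intro h
    rw [h] at hcon
    exact (not_top_lt) hcon
  have hlt : a.toReal < 1 := by
    have := ENNReal.toReal_lt_toReal hat (by norm_num : (1:ENNReal) ≠ ⊤)
    simpa using this.2 hcon
  have h0 : 0 ≤ a.toReal := ENNReal.toReal_nonneg
  set p : ℝ := (a.toReal + 1) / 2 with hpdef
  have hp0 : 0 < p := by rw [hpdef]; linarith
  have hp1 : p < 1 := by rw [hpdef]; linarith
  have hmem : ENNReal.ofReal p ∈
      {x : ENNReal | ∃ q : ℝ, 0 < q ∧ MemHardy q f ∧ x = ENNReal.ofReal q} :=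
    ⟨p, hp0, my_memHardy C hC f hf hp0 hp1, rfl⟩
  have hle : ENNReal.ofReal p ≤ a := le_sSup hmem
  have : p ≤ a.toReal := (ENNReal.ofReal_le_iff_le_toReal hat).1 hle
  rw [hpdef] at this
  linarith
end

section
/- For every p ∈ [1/2, 1) there is no comb domain C with Hardy number h(C) = p; that is, the range of the Hardy number over all comb domains is contained in [1, +∞]. -/
open Complex Set MeasureTheory

lemma meanValueCircle (g : ℂ → ℂ) (hg : DifferentiableOn ℂ g (Metric.ball 0 1))
    {r : ℝ} (h0 : 0 < r) (h1 : r < 1) :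
    (∫ θ in (0:ℝ)..(2*Real.pi), g ((r:ℂ) * Complex.exp ((θ:ℂ)*Complex.I)))
      = 2*Real.pi * g 0 := by
  have hsub : Metric.closedBall (0:ℂ) r ⊆ Metric.ball 0 1 := by
    intro z hz
    simp only [Metric.mem_closedBall, Metric.mem_ball] at *
    linarith
  have hd : DiffContOnCl ℂ g (Metric.ball 0 r) := by
    refine ⟨hg.mono (Metric.ball_subset_ball h1.le), ?_⟩
    rw [closure_ball (0:ℂ) h0.ne']
    exact hg.continuousOn.mono hsub
  have h := hd.circleIntegral_sub_inv_smul (Metric.mem_ball_self h0)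
  rw [circleIntegral] at h
  have hint : ∀ θ : ℝ, deriv (circleMap 0 r) θ •
      ((circleMap 0 r θ - 0)⁻¹ • g (circleMap 0 r θ))
      = Complex.I * g ((r:ℂ) * Complex.exp ((θ:ℂ)*Complex.I)) := by
    intro θ
    have hz : circleMap 0 r θ = (r:ℂ) * Complex.exp ((θ:ℂ)*Complex.I) := by
      simp [circleMap]
    have hz0 : circleMap 0 r θ ≠ 0 := circleMap_ne_center h0.ne'
    rw [deriv_circleMap, smul_eq_mul, smul_eq_mul, sub_zero]
    rw [← hz]
    have : circleMap 0 r θ * Complex.I * ((circleMap 0 r θ)⁻¹ * g (circleMap 0 r θ))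
        = (circleMap 0 r θ * (circleMap 0 r θ)⁻¹) * (Complex.I * g (circleMap 0 r θ)) := by
      ring
    rw [this, mul_inv_cancel₀ hz0, one_mul]
  simp only [hint] at h
  rw [intervalIntegral.integral_const_mul] at h
  have hI : (2 * (Real.pi:ℂ) * Complex.I) • g 0 = Complex.I * (2*Real.pi * g 0) := by
    simp [smul_eq_mul]; ring
  rw [hI] at h
  exact mul_left_cancel₀ Complex.I_ne_zero h

lemma real_rpow_add_le (a b : ℝ) (ha : 0 ≤ a) (hb : 0 ≤ b) {s : ℝ} (hs0 : 0 ≤ s)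
    (hs1 : s ≤ 1) : (a + b) ^ s ≤ a ^ s + b ^ s := by
  have h := NNReal.rpow_add_le_add_rpow a.toNNReal b.toNNReal hs0 hs1
  have := (NNReal.coe_le_coe).2 h
  rwa [NNReal.coe_add, NNReal.coe_rpow, NNReal.coe_rpow, NNReal.coe_rpow, NNReal.coe_add,
    Real.coe_toNNReal a ha, Real.coe_toNNReal b hb] at this

/-- The key Hardy space membership: if `f` maps the disk into the complement of the two
vertical rays `{iy : |y| ≥ β}`, then `f ∈ H^q` for all `0 < q < 1`. -/
lemma memHardy_of_avoids_rays (f : ℂ → ℂ) (hfd : DifferentiableOn ℂ f (Metric.ball 0 1))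
    {β : ℝ} (hβ : 0 < β)
    (havoid : ∀ z ∈ Metric.ball (0:ℂ) 1, ¬((f z).re = 0 ∧ β ≤ |(f z).im|))
    {q : ℝ} (hq0 : 0 < q) (hq1 : q < 1) : MemHardy q f := by
  classical
  set v : ℂ → ℂ := fun z => f z ^ 2 + ((β:ℂ))^2 with hv
  -- v maps the ball into the slit plane
  have hslit : ∀ z ∈ Metric.ball (0:ℂ) 1, v z ∈ Complex.slitPlane := by
    intro z hz
    by_contra hcon
    rw [Complex.mem_slitPlane_iff] at hcon
    push_neg at hcon
    obtain ⟨hre, him⟩ := hcon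
    set s := (f z).re
    set t := (f z).im
    have hsq_im : (f z ^ 2).im = 2 * s * t := by
      rw [sq]; rw [Complex.mul_im]; ring
    have hsq_re : (f z ^ 2).re = s^2 - t^2 := by
      rw [sq]; rw [Complex.mul_re]; ring
    have hvim : (v z).im = 2 * s * t := by
      simp [hv, hsq_im, ← Complex.ofReal_pow]
    have hvre : (v z).re = s^2 - t^2 + β^2 := by
      simp [hv, hsq_re, ← Complex.ofReal_pow]
    rw [hvim] at him
    rw [hvre] at hre
    have hst : s * t = 0 := by linarith
    have ht : t ≠ 0 := by
      intro h
      rw [h] at hre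
      nlinarith
    have hs : s = 0 := by
      rcases mul_eq_zero.1 hst with h | h
      · exact h
      · exact absurd h ht
    have hβt : β ≤ |t| := by
      rw [hs] at hre
      nlinarith [abs_nonneg t, _root_.sq_abs t]
    exact havoid z hz ⟨hs, hβt⟩
  have hv0 : ∀ z ∈ Metric.ball (0:ℂ) 1, v z ≠ 0 := fun z hz =>
    Complex.slitPlane_ne_zero (hslit z hz)
  have hvd : DifferentiableOn ℂ v (Metric.ball 0 1) := by
    intro z hz
    exact ((hfd z hz).pow 2).add_const _
  set c : ℂ := ((q/2 : ℝ) : ℂ) with hc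
  set w : ℂ → ℂ := fun z => v z ^ c with hw
  have hwd : DifferentiableOn ℂ w (Metric.ball 0 1) := by
    intro z hz
    exact (hvd z hz).cpow (differentiableWithinAt_const c) (hslit z hz)
  set cq : ℝ := Real.cos (Real.pi * (q/2)) with hcq
  have hcq0 : 0 < cq := by
    apply Real.cos_pos_of_mem_Ioo
    constructor
    · nlinarith [Real.pi_pos]
    · nlinarith [Real.pi_pos]
  -- pointwise: Re (w z) = |v z|^(q/2) * cos(arg (v z) * (q/2))  and the key bound
  have hkey : ∀ z ∈ Metric.ball (0:ℂ) 1,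
      ‖f z‖ ^ q ≤ (1/cq) * (w z).re + β ^ q := by
    intro z hz
    have hvz0 : v z ≠ 0 := hv0 z hz
    have habs_pos : 0 < ‖v z‖ := by
      simpa [norm_pos_iff] using hvz0
    -- Re w = |v|^{q/2} * cos(arg v * (q/2))
    have hre_w : (w z).re = ‖v z‖ ^ (q/2) * Real.cos (Complex.arg (v z) * (q/2)) := by
      rw [hw]
      simp only
      rw [Complex.cpow_def_of_ne_zero hvz0, Complex.exp_re]
      have h1 : (Complex.log (v z) * c).re = Real.log ‖v z‖ * (q/2) := by
        rw [Complex.mul_re]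
        simp [hc, Complex.log_re]
      have h2 : (Complex.log (v z) * c).im = Complex.arg (v z) * (q/2) := by
        rw [Complex.mul_im]
        simp [hc, Complex.log_im]
      rw [h1, h2, Real.rpow_def_of_pos habs_pos]
    -- cos bound
    have hcos : cq ≤ Real.cos (Complex.arg (v z) * (q/2)) := by
      have := Real.cos_abs (Complex.arg (v z) * (q/2))
      rw [← this, hcq]
      apply Real.cos_le_cos_of_nonneg_of_le_pi (abs_nonneg _)
      · nlinarith [Real.pi_pos]
      · rw [abs_mul]
        have h1 := Complex.abs_arg_le_pi (v z)
        have h2 : |q/2| = q/2 := _root_.abs_of_nonneg (by linarith)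
        rw [h2]
        nlinarith [Real.pi_pos]
    have hv_le : ‖v z‖ ^ (q/2) ≤ (1/cq) * (w z).re := by
      calc ‖v z‖ ^ (q/2)
          = (1/cq) * (‖v z‖ ^ (q/2) * cq) := by field_simp
        _ ≤ (1/cq) * (w z).re := by
            rw [hre_w]
            apply mul_le_mul_of_nonneg_left _ (by positivity)
            exact mul_le_mul_of_nonneg_left hcos
              (Real.rpow_nonneg (norm_nonneg _) _)
    -- |f z|^q ≤ |v z|^{q/2} + β^q
    have hfq : ‖f z‖ ^ q ≤ ‖v z‖ ^ (q/2) + β ^ q := by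
      have e1 : ‖f z‖ ^ q = (‖f z ^ 2‖) ^ (q/2) := by
        rw [norm_pow, ← Real.rpow_natCast (‖f z‖) 2,
          ← Real.rpow_mul (norm_nonneg _)]
        norm_num
        congr 1
        ring
      have e2 : ‖f z ^ 2‖ ≤ ‖v z‖ + β^2 := by
        have : f z ^ 2 = v z - ((β:ℂ))^2 := by rw [hv]; ring
        rw [this]
        calc ‖v z - ((β:ℂ))^2‖
            ≤ ‖v z‖ + ‖((β:ℂ))^2‖ := by
              exact norm_sub_le _ _
          _ = ‖v z‖ + β^2 := by
              rw [norm_pow]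
              simp [Complex.norm_real, abs_of_pos hβ]
      have e3 : (‖v z‖ + β^2) ^ (q/2)
          ≤ ‖v z‖ ^ (q/2) + (β^2) ^ (q/2) := by
        apply real_rpow_add_le _ _ (norm_nonneg _) (by positivity) (by linarith)
          (by linarith)
      have e4 : ((β:ℝ)^2) ^ (q/2) = β ^ q := by
        rw [← Real.rpow_natCast β 2, ← Real.rpow_mul hβ.le]
        norm_num
        congr 1
        ring
      calc ‖f z‖ ^ q = (‖f z ^ 2‖) ^ (q/2) := e1
        _ ≤ (‖v z‖ + β^2) ^ (q/2) := by
            apply Real.rpow_le_rpow (norm_nonneg _) e2 (by linarith)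
        _ ≤ ‖v z‖ ^ (q/2) + (β^2) ^ (q/2) := e3
        _ = ‖v z‖ ^ (q/2) + β ^ q := by rw [e4]
    linarith
  -- Now the integral bound
  refine ⟨hfd, (1/cq) * (2*Real.pi * (w 0).re) + 2*Real.pi * β ^ q, ?_⟩
  intro r hr0 hr1
  set φ : ℝ → ℂ := fun θ => (r:ℂ) * Complex.exp ((θ:ℂ) * Complex.I) with hφ
  have hφball : ∀ θ : ℝ, φ θ ∈ Metric.ball (0:ℂ) 1 := by
    intro θ
    simp only [hφ, Metric.mem_ball, dist_zero_right, norm_mul]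
    rw [Complex.norm_real, Real.norm_eq_abs, abs_of_pos hr0]
    have : ‖Complex.exp ((θ:ℂ) * Complex.I)‖ = 1 :=
      Complex.norm_exp_ofReal_mul_I θ
    rw [this, mul_one]
    exact hr1
  have hφcont : Continuous φ := by
    apply Continuous.mul continuous_const
    exact Complex.continuous_exp.comp (Continuous.mul Complex.continuous_ofReal
      continuous_const)
  have hcont_f : Continuous fun θ => ‖f (φ θ)‖ ^ q := by
    have h1 : Continuous fun θ => ‖f (φ θ)‖ := by
      apply continuous_norm.comp
      exact hfd.continuousOn.comp_continuous hφcont hφball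
    have h2 : Continuous fun x : ℝ => x ^ q := by
      rw [continuous_iff_continuousAt]
      intro x
      exact Real.continuousAt_rpow_const x q (Or.inr hq0.le)
    exact h2.comp h1
  have hcont_w : Continuous fun θ => (w (φ θ)).re :=
    Complex.continuous_re.comp (hwd.continuousOn.comp_continuous hφcont hφball)
  have hint_w : IntervalIntegrable (fun θ => (w (φ θ))) MeasureTheory.volume 0 (2*Real.pi) :=
    ((hwd.continuousOn.comp_continuous hφcont hφball)).intervalIntegrable _ _
  have hmean : (∫ θ in (0:ℝ)..(2*Real.pi), w (φ θ)) = 2*Real.pi * w 0 :=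
    meanValueCircle w hwd hr0 hr1
  have hre_int : (∫ θ in (0:ℝ)..(2*Real.pi), (w (φ θ)).re) = 2*Real.pi * (w 0).re := by
    have := Complex.reCLM.intervalIntegral_comp_comm hint_w
    simp only [Complex.reCLM_apply] at this
    rw [this, hmean]
    simp
  have hmono : (∫ θ in (0:ℝ)..(2*Real.pi), ‖f (φ θ)‖ ^ q)
      ≤ ∫ θ in (0:ℝ)..(2*Real.pi), ((1/cq) * (w (φ θ)).re + β ^ q) := by
    apply intervalIntegral.integral_mono_on (by positivity)
    · exact hcont_f.intervalIntegrable _ _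
    · exact ((continuous_const.mul hcont_w).add continuous_const).intervalIntegrable _ _
    · intro θ _
      exact hkey (φ θ) (hφball θ)
  calc (∫ θ in (0:ℝ)..(2*Real.pi), ‖f (φ θ)‖ ^ q)
      ≤ ∫ θ in (0:ℝ)..(2*Real.pi), ((1/cq) * (w (φ θ)).re + β ^ q) := hmono
    _ = (1/cq) * (∫ θ in (0:ℝ)..(2*Real.pi), (w (φ θ)).re) + 2*Real.pi * β ^ q := by
        rw [intervalIntegral.integral_add (f := fun θ => (1/cq) * (w (φ θ)).re) (g := fun _ => β ^ q)
          ((continuous_const.mul hcont_w).intervalIntegrable _ _)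
          (continuous_const.intervalIntegrable _ _),
          intervalIntegral.integral_const_mul, intervalIntegral.integral_const]
        simp only [smul_eq_mul, sub_zero]
    _ = (1/cq) * (2*Real.pi * (w 0).re) + 2*Real.pi * β ^ q := by rw [hre_int]


/-- No comb domain has Hardy number in `[1/2, 1)`: the range of the Hardy number over
comb domains is contained in `[1, +∞]`. -/
theorem hardyNumber_comb_not_in_Ico (p : ENNReal) (hp : p ∈ Set.Ico (1/2 : ENNReal) 1) :
    ¬ ∃ (C : Set ℂ) (f : ℂ → ℂ), IsCombDomain C ∧ IsRiemannMap f C ∧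
      hardyNumber f = p := by
  rintro ⟨C, f, ⟨x, b, hmono, hx0, -, hb, hCeq⟩, ⟨hfd, hinj, him⟩, hhn⟩
  obtain ⟨hp_half, hp1⟩ := hp
  have hpt : p ≠ ⊤ := hp1.ne_top
  have ht1 : p.toReal < 1 := by
    rw [← ENNReal.ofReal_one] at hp1
    exact (ENNReal.lt_ofReal_iff_toReal_lt hpt).1 hp1
  have htnn : (0:ℝ) ≤ p.toReal := ENNReal.toReal_nonneg
  set q : ℝ := (1 + p.toReal)/2 with hq
  have hq0 : 0 < q := by rw [hq]; linarith
  have hq1 : q < 1 := by rw [hq]; linarith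
  have hqt : p.toReal < q := by rw [hq]; linarith
  have havoid : ∀ z ∈ Metric.ball (0:ℂ) 1, ¬((f z).re = 0 ∧ b 0 ≤ |(f z).im|) := by
    rintro z hz ⟨h1, h2⟩
    have hfz : f z ∈ C := him ▸ Set.mem_image_of_mem f hz
    rw [hCeq] at hfz
    apply hfz
    refine Set.mem_iUnion.2 ⟨0, ⟨?_, h2⟩⟩
    rw [hx0]
    exact h1
  have hmem : MemHardy q f := memHardy_of_avoids_rays f hfd (hb 0) havoid hq0 hq1
  have hle : ENNReal.ofReal q ≤ hardyNumber f := le_sSup ⟨q, hq0, hmem, rfl⟩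
  rw [hhn] at hle
  rw [← ENNReal.ofReal_toReal hpt] at hle
  have := (ENNReal.ofReal_le_ofReal_iff htnn).1 hle
  linarith
end
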